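/- Let R be a commutative ring and A ∈ Mat_{n×m}(R) with n ≤ m. Then the R-linear map A : R^m → R^n is surjective if and only if for every prime ideal 𝔭 of R, the matrix A(𝔭) obtained by reducing A modulo 𝔭 has rank n over the residue field k(𝔭) = R_𝔭/𝔭R_𝔭. -/

import Mathlib

open Matrix

section aux

variable {n m : ℕ}

private lemma matrix_rank_eq_iff_surjective {K : Type*} [Field K]
    (B : Matrix (Fin n) (Fin m) K) :
    B.rank = n ↔ Function.Surjective B.mulVecLin := by
  rw [← LinearMap.range_eq_top, Matrix.rank]
  constructor
  · intro h
    apply Submodule.eq_top_of_finrank_eq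
    simp [h]
  · intro h
    rw [h]
    simp

private lemma surjective_matrix_map {R S : Type*} [CommRing R] [CommRing S] (f : R →+* S)
    (A : Matrix (Fin n) (Fin m) R) (h : Function.Surjective A.mulVecLin) :
    Function.Surjective (A.map f).mulVecLin := by
  rw [← LinearMap.range_eq_top, ← top_le_iff]
  have hs : ∀ i, Pi.single i (1 : S) ∈ LinearMap.range (A.map f).mulVecLin := by
    intro i
    obtain ⟨x, hx⟩ := h (Pi.single i 1)
    refine ⟨f ∘ x, funext fun k => ?_⟩
    have h1 : A.mulVecLin x k = (Pi.single i 1 : Fin n → R) k := by rw [hx]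
    rw [Matrix.mulVecLin_apply] at h1
    rw [Matrix.mulVecLin_apply, ← RingHom.map_mulVec, h1]
    rcases eq_or_ne i k with rfl | hik
    · simp
    · simp [Pi.single_apply, hik]
  intro y _
  have hy : y = ∑ i, Pi.single i (y i) := (Finset.univ_sum_single y).symm
  rw [hy]
  refine Submodule.sum_mem _ fun i _ => ?_
  have : (Pi.single i (y i) : Fin n → S) = y i • (Pi.single i (1 : S) : Fin n → S) := by
    ext j
    simp [Pi.single_apply, mul_ite]
  rw [this]
  exact Submodule.smul_mem _ _ (hs i)

private lemma pi_mem_smul_top {S : Type*} [CommRing S] (I : Ideal S) (x : Fin n → S)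
    (hx : ∀ i, x i ∈ I) : x ∈ I • (⊤ : Submodule S (Fin n → S)) := by
  have hy : x = ∑ i, Pi.single i (x i) := (Finset.univ_sum_single x).symm
  rw [hy]
  refine Submodule.sum_mem _ fun i _ => ?_
  have : (Pi.single i (x i) : Fin n → S) = x i • (Pi.single i (1 : S) : Fin n → S) := by
    ext j
    simp [Pi.single_apply, mul_ite]
  rw [this]
  exact Submodule.smul_mem_smul (hx i) trivial

private lemma surjective_of_surjective_residue {S : Type*} [CommRing S] [IsLocalRing S]
    (B : Matrix (Fin n) (Fin m) S)
    (h : Function.Surjective (B.map (IsLocalRing.residue S)).mulVecLin) :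
    Function.Surjective B.mulVecLin := by
  rw [← LinearMap.range_eq_top, ← top_le_iff]
  refine Submodule.le_of_le_smul_of_le_jacobson_bot Module.Finite.fg_top
    (IsLocalRing.maximalIdeal_le_jacobson ⊥) ?_
  intro x _
  obtain ⟨v, hv⟩ := h (IsLocalRing.residue S ∘ x)
  choose w hw using fun j => IsLocalRing.residue_surjective (R := S) (v j)
  have key : x - B *ᵥ w ∈ (IsLocalRing.maximalIdeal S) • (⊤ : Submodule S (Fin n → S)) := by
    refine pi_mem_smul_top _ _ fun i => ?_
    have h1 : (B.map (IsLocalRing.residue S)).mulVecLin v i = (IsLocalRing.residue S ∘ x) i := by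
      rw [hv]
    rw [Matrix.mulVecLin_apply] at h1
    have h2 : IsLocalRing.residue S ∘ w = v := funext fun j => hw j
    have : IsLocalRing.residue S ((x - B *ᵥ w) i) = 0 := by
      have h3 : IsLocalRing.residue S ((B *ᵥ w) i)
          = (B.map (IsLocalRing.residue S) *ᵥ (IsLocalRing.residue S ∘ w)) i :=
        RingHom.map_mulVec _ _ _ _
      rw [Pi.sub_apply, map_sub, h3, h2, h1]
      simp
    exact Ideal.Quotient.eq_zero_iff_mem.mp this
  have hx : x = B *ᵥ w + (x - B *ᵥ w) := by abel
  rw [hx]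
  exact Submodule.add_mem_sup ⟨w, rfl⟩ key

variable (R : Type*) [CommRing R]

/-- The canonical localization map on pi types. -/
noncomputable def locPi (P : Ideal R) [P.IsPrime] :
    (Fin n → R) →ₗ[R] (Fin n → Localization.AtPrime P) :=
  (Finsupp.linearEquivFunOnFinite R (Localization.AtPrime P) (Fin n)).toLinearMap ∘ₗ
    (Finsupp.mapRange.linearMap (Algebra.linearMap R (Localization.AtPrime P)) ∘ₗ
      (Finsupp.linearEquivFunOnFinite R R (Fin n)).symm.toLinearMap)

lemma locPi_isLocalizedModule (P : Ideal R) [P.IsPrime] :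
    IsLocalizedModule P.primeCompl (locPi (n := n) R P) := by
  unfold locPi
  infer_instance

@[simp] lemma locPi_apply (P : Ideal R) [P.IsPrime] (x : Fin n → R) (i : Fin n) :
    locPi R P x i = algebraMap R (Localization.AtPrime P) (x i) := by
  simp [locPi, Finsupp.linearEquivFunOnFinite]
  rfl

end aux

/-- `A : R^m → R^n` (with `n ≤ m`) is surjective iff for every prime ideal
`𝔭` of `R` the reduction of `A` modulo `𝔭`, i.e. the image of `A` in the
residue field `k(𝔭) = R_𝔭/𝔭R_𝔭`, has rank `n`. -/
theorem surjective_iff_rank_residueField {R : Type*} [CommRing R] {n m : ℕ}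
    (hnm : n ≤ m) (A : Matrix (Fin n) (Fin m) R) :
    Function.Surjective A.mulVecLin ↔
      ∀ (p : Ideal R) (_ : p.IsPrime),
        (A.map ((IsLocalRing.residue (Localization.AtPrime p)).comp
          (algebraMap R (Localization.AtPrime p)))).rank = n := by
  constructor
  · intro h p hp
    haveI := hp
    exact (matrix_rank_eq_iff_surjective _).mpr (surjective_matrix_map _ A h)
  · intro h
    rw [← LinearMap.range_eq_top, Submodule.eq_top_iff']
    intro x
    refine @Submodule.mem_of_localization_maximal R (Fin n → R) _ _ _
      (fun P hP => Fin n → @Localization.AtPrime R _ P hP.isPrime)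
      (fun P hP => inferInstance) (fun P hP => inferInstance)
      (fun P hP => @locPi n R _ P hP.isPrime)
      (fun P hP => @locPi_isLocalizedModule n R _ P hP.isPrime) x _ fun P hP => ?_
    haveI : P.IsPrime := hP.isPrime
    beta_reduce
    haveI := locPi_isLocalizedModule (n := n) R P
    -- the matrix over the localization
    set L := Localization.AtPrime P
    set B : Matrix (Fin n) (Fin m) L := A.map (algebraMap R L) with hB
    have hBsurj : Function.Surjective B.mulVecLin := by
      apply surjective_of_surjective_residue
      apply (matrix_rank_eq_iff_surjective _).mp
      have : B.map (IsLocalRing.residue L)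
          = A.map ((IsLocalRing.residue L).comp (algebraMap R L)) := by
        rw [hB, Matrix.map_map]
        rfl
      rw [this]
      exact h P inferInstance
    obtain ⟨v, hv⟩ := hBsurj (locPi R P x)
    obtain ⟨b, hb⟩ := IsLocalization.exist_integer_multiples_of_finite P.primeCompl v
    choose w hw using hb
    refine ⟨A.mulVecLin w, LinearMap.mem_range_self _ w, b, ?_⟩
    rw [IsLocalizedModule.mk'_eq_iff]
    funext i
    have h1 : B.mulVecLin v i = locPi R P x i := by rw [hv]
    rw [Matrix.mulVecLin_apply] at h1
    have h2 : (algebraMap R L) ∘ w = (b : R) • v := funext fun j => by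
      rw [Function.comp_apply, hw j]; rfl
    calc locPi R P (A.mulVecLin w) i
        = algebraMap R L (A.mulVecLin w i) := locPi_apply R P _ i
      _ = algebraMap R L ((A *ᵥ w) i) := by rw [Matrix.mulVecLin_apply]
      _ = (B *ᵥ ((algebraMap R L) ∘ w)) i := RingHom.map_mulVec _ _ _ _
      _ = (B *ᵥ ((b : R) • v)) i := by rw [h2]
      _ = ((b : R) • (B *ᵥ v)) i := by rw [Matrix.mulVec_smul]
      _ = (b : R) • (locPi R P x i) := by rw [Pi.smul_apply, h1]
      _ = (b • locPi R P x) i := by rw [Pi.smul_apply, Submonoid.smul_def]
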